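/- arXiv:1902.04817 — 2 statements merged into one kernel-verified Lean document; each statement's English description precedes it below -/
import Mathlib

section
/- (A-compactness for consequence.) Let A be a fixed finite MTL-chain and P a predicate language. For every set of P-sentences Σ and every P-sentence φ, if Σ ⊨_A φ, then there is a finite subset Σ₀ ⊆ Σ such that Σ₀ ⊨_A φ. -/
noncomputable section
open Classical

universe u

/-- A finite MTL-chain: a finite linearly ordered set with least and greatest
elements, a commutative monoid operation `*` with unit `1 = ⊤` that is monotone
in each argument, and the residuum determined by `a * b ≤ c ↔ a ≤ resid b c`. -/
class MTLChain (A : Type u) extends Fintype A, LinearOrder A, CommMonoid A, BoundedOrder A where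
  one_eq_top : (1 : A) = ⊤
  mul_mono : ∀ {a b : A}, a ≤ b → ∀ c : A, c * a ≤ c * b
  resid : A → A → A
  resid_galois : ∀ a b c : A, a * b ≤ c ↔ a ≤ resid b c

noncomputable instance MTLChain.toCompleteLinearOrder (A : Type u) [MTLChain A] :
    CompleteLinearOrder A :=
  Fintype.toCompleteLinearOrder A

/-- A predicate language: predicate symbols and function symbols, each with
a finite arity.  (Nullary predicates are truth constants, nullary functions
are individual constants.)  Crisp equality `≈` is built into formulas. -/
structure Lang : Type (u + 1) where
  Pred : Type u
  predAr : Pred → ℕ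
  Func : Type u
  funcAr : Func → ℕ

variable {A : Type u} [MTLChain A] {L : Lang.{u}}

/-- Terms of a predicate language, with variables indexed by `ℕ`. -/
inductive Term (L : Lang.{u}) : Type u where
  | var : ℕ → Term L
  | func (f : L.Func) (ts : Fin (L.funcAr f) → Term L) : Term L

/-- Formulas: atomic formulas (predicates applied to terms, and crisp equality),
strong conjunction `&`, weak conjunction `∧`, weak disjunction `∨`,
implication `→`, and the quantifiers. -/
inductive Formula (L : Lang.{u}) : Type u where
  | rel (P : L.Pred) (ts : Fin (L.predAr P) → Term L) : Formula L
  | eq (t₁ t₂ : Term L) : Formula L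
  | sconj (φ ψ : Formula L) : Formula L
  | wconj (φ ψ : Formula L) : Formula L
  | wdisj (φ ψ : Formula L) : Formula L
  | impl (φ ψ : Formula L) : Formula L
  | all (x : ℕ) (φ : Formula L) : Formula L
  | ex (x : ℕ) (φ : Formula L) : Formula L

/-- An `A`-structure for the language `L`: a nonempty domain, an `A`-valued
interpretation of each predicate symbol, and an interpretation of each
function symbol. -/
structure Structure (L : Lang.{u}) (A : Type u) [MTLChain A] : Type (u + 1) where
  Dom : Type u
  [dom_nonempty : Nonempty Dom]
  funMap (f : L.Func) : (Fin (L.funcAr f) → Dom) → Dom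
  relMap (P : L.Pred) : (Fin (L.predAr P) → Dom) → A

attribute [instance] Structure.dom_nonempty

/-- Value of a term under an evaluation of the variables. -/
def Term.val (M : Structure L A) (v : ℕ → M.Dom) : Term L → M.Dom
  | .var n => v n
  | .func f ts => M.funMap f fun i => (ts i).val M v

/-- Truth value of a formula in an `A`-structure under an evaluation of the
variables.  Equality is crisp, `&` is interpreted by `*`, `∧` by minimum,
`∨` by maximum, `→` by the residuum, `∀` by infimum (= minimum) and `∃` by
supremum (= maximum) over the domain. -/
def Formula.val (M : Structure L A) : Formula L → (ℕ → M.Dom) → A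
  | .rel P ts, v => M.relMap P fun i => (ts i).val M v
  | .eq t₁ t₂, v => if t₁.val M v = t₂.val M v then 1 else ⊥
  | .sconj φ ψ, v => φ.val M v * ψ.val M v
  | .wconj φ ψ, v => φ.val M v ⊓ ψ.val M v
  | .wdisj φ ψ, v => φ.val M v ⊔ ψ.val M v
  | .impl φ ψ, v => MTLChain.resid (φ.val M v) (ψ.val M v)
  | .all x φ, v => ⨅ a : M.Dom, φ.val M (Function.update v x a)
  | .ex x φ, v => ⨆ a : M.Dom, φ.val M (Function.update v x a)

/-- Free variables of a term. -/
def Term.fvars : Term L → Set ℕ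
  | .var n => {n}
  | .func _ ts => ⋃ i, (ts i).fvars

/-- Free variables of a formula. -/
def Formula.fvars : Formula L → Set ℕ
  | .rel _ ts => ⋃ i, (ts i).fvars
  | .eq t₁ t₂ => t₁.fvars ∪ t₂.fvars
  | .sconj φ ψ => φ.fvars ∪ ψ.fvars
  | .wconj φ ψ => φ.fvars ∪ ψ.fvars
  | .wdisj φ ψ => φ.fvars ∪ ψ.fvars
  | .impl φ ψ => φ.fvars ∪ ψ.fvars
  | .all x φ => φ.fvars \ {x}
  | .ex x φ => φ.fvars \ {x}

/-- A sentence is a formula with no free variables. -/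
def Formula.IsSentence (φ : Formula L) : Prop := φ.fvars = ∅

/-- `φ` is valid in `M` (i.e. `‖φ‖_M = 1`). -/
def Valid (M : Structure L A) (φ : Formula L) : Prop :=
  ∀ v : ℕ → M.Dom, φ.val M v = 1

/-- `M` is an `A`-model of the set of sentences `T`. -/
def Models (M : Structure L A) (T : Set (Formula L)) : Prop :=
  ∀ φ ∈ T, Valid M φ

/-- Two structures are elementarily equivalent if the same sentences are valid
in both (i.e. they have the same theory). -/
def ElemEquiv (M N : Structure L A) : Prop :=
  ∀ φ : Formula L, φ.IsSentence → (Valid M φ ↔ Valid N φ)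

/-- `g : M → N` is a homomorphism of `A`-structures: it commutes with the
interpretation of function symbols, and preserves truth (value `1`) of
atomic predicates. -/
structure IsHom (M N : Structure L A) (g : M.Dom → N.Dom) : Prop where
  map_fun : ∀ (f : L.Func) (d : Fin (L.funcAr f) → M.Dom),
    g (M.funMap f d) = N.funMap f (g ∘ d)
  map_rel : ∀ (P : L.Pred) (d : Fin (L.predAr P) → M.Dom),
    M.relMap P d = 1 → N.relMap P (g ∘ d) = 1

/-- Atomic formulas. -/
inductive IsAtomicFormula : Formula L → Prop
  | rel (P : L.Pred) (ts : Fin (L.predAr P) → Term L) : IsAtomicFormula (.rel P ts)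
  | eq (t₁ t₂ : Term L) : IsAtomicFormula (.eq t₁ t₂)

/-- Quantifier-free formulas built from atomic formulas using only `∧` and `&`. -/
inductive QFConj : Formula L → Prop
  | atom {φ : Formula L} : IsAtomicFormula φ → QFConj φ
  | sconj {φ ψ : Formula L} : QFConj φ → QFConj ψ → QFConj (.sconj φ ψ)
  | wconj {φ ψ : Formula L} : QFConj φ → QFConj ψ → QFConj (.wconj φ ψ)

/-- Quantifier-free formulas built from atomic formulas using only `∧`. -/
inductive QFWConj : Formula L → Prop
  | atom {φ : Formula L} : IsAtomicFormula φ → QFWConj φ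
  | wconj {φ ψ : Formula L} : QFWConj φ → QFWConj ψ → QFWConj (.wconj φ ψ)

/-- Quantifier-free formulas built from atomic formulas using only `&`. -/
inductive QFSConj : Formula L → Prop
  | atom {φ : Formula L} : IsAtomicFormula φ → QFSConj φ
  | sconj {φ ψ : Formula L} : QFSConj φ → QFSConj ψ → QFSConj (.sconj φ ψ)

/-- Quantifier-free formulas built from atomic formulas using only `∧`, `∨` and `&`. -/
inductive QFPos : Formula L → Prop
  | atom {φ : Formula L} : IsAtomicFormula φ → QFPos φ
  | sconj {φ ψ : Formula L} : QFPos φ → QFPos ψ → QFPos (.sconj φ ψ)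
  | wconj {φ ψ : Formula L} : QFPos φ → QFPos ψ → QFPos (.wconj φ ψ)
  | wdisj {φ ψ : Formula L} : QFPos φ → QFPos ψ → QFPos (.wdisj φ ψ)

/-- Positive-primitive (∧&-primitive) formulas: `(∃ x̄) ψ` with `ψ`
quantifier-free built from atomic formulas using only `∧` and `&`. -/
inductive IsPP : Formula L → Prop
  | base {φ : Formula L} : QFConj φ → IsPP φ
  | ex {φ : Formula L} (x : ℕ) : IsPP φ → IsPP (.ex x φ)

/-- ∧-primitive formulas. -/
inductive IsWPrimitive : Formula L → Prop
  | base {φ : Formula L} : QFWConj φ → IsWPrimitive φ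
  | ex {φ : Formula L} (x : ℕ) : IsWPrimitive φ → IsWPrimitive (.ex x φ)

/-- &-primitive formulas. -/
inductive IsSPrimitive : Formula L → Prop
  | base {φ : Formula L} : QFSConj φ → IsSPrimitive φ
  | ex {φ : Formula L} (x : ℕ) : IsSPrimitive φ → IsSPrimitive (.ex x φ)

/-- Existential positive formulas: `(∃ x̄) ψ` with `ψ` quantifier-free built
from atomic formulas using only `∧`, `∨` and `&`. -/
inductive IsExPos : Formula L → Prop
  | base {φ : Formula L} : QFPos φ → IsExPos φ
  | ex {φ : Formula L} (x : ℕ) : IsExPos φ → IsExPos (.ex x φ)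

/-- The `A`-direct product of a nonempty family of `A`-structures:
cartesian product domain, coordinatewise interpretation of function symbols,
and predicates interpreted by the minimum of the coordinatewise values. -/
def dirProd {I : Type u} [Nonempty I] (Ms : I → Structure L A) : Structure L A where
  Dom := ∀ i, (Ms i).Dom
  funMap f d := fun i => (Ms i).funMap f fun k => d k i
  relMap P d := ⨅ i, (Ms i).relMap P fun k => d k i

/-- The data of a weak `A`-direct product of a family of `A`-structures: an
interpretation of the predicate symbols on the cartesian product taking value
`1` exactly when all the coordinatewise values are `1`. -/
structure WeakProdData {I : Type u} (Ms : I → Structure L A) : Type u where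
  relMap (P : L.Pred) : (Fin (L.predAr P) → ∀ i, (Ms i).Dom) → A
  rel_one_iff : ∀ (P : L.Pred) (d : Fin (L.predAr P) → ∀ i, (Ms i).Dom),
    relMap P d = 1 ↔ ∀ i, (Ms i).relMap P (fun k => d k i) = 1

/-- The weak `A`-direct product structure determined by such data. -/
def WeakProdData.toStructure {I : Type u} [Nonempty I] {Ms : I → Structure L A}
    (W : WeakProdData Ms) : Structure L A where
  Dom := ∀ i, (Ms i).Dom
  funMap f d := fun i => (Ms i).funMap f fun k => d k i
  relMap := W.relMap
section UProdAux

variable {A : Type u} [MTLChain A] {L : Lang.{u}} {I : Type u} (U : Ultrafilter I)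

private lemma ulim_exists (b : I → A) : ∃ a : A, {i | b i = a} ∈ U := by
  by_contra hc
  push_neg at hc
  have h2 : (⋂ a : A, {i | b i = a}ᶜ) ∈ U :=
    (Filter.iInter_mem (f := (U : Filter I))).mpr fun a =>
      Ultrafilter.compl_mem_iff_notMem.mpr (hc a)
  obtain ⟨i, hi⟩ := Ultrafilter.nonempty_of_mem h2
  simp only [Set.mem_iInter, Set.mem_compl_iff, Set.mem_setOf_eq] at hi
  exact hi (b i) rfl

/-- The value taken `U`-almost everywhere by a function into the finite chain `A`. -/
private def ulim (b : I → A) : A := (ulim_exists U b).choose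

private lemma ulim_mem (b : I → A) : {i | b i = ulim U b} ∈ U :=
  (ulim_exists U b).choose_spec

private lemma ulim_eq {b : I → A} {a : A} (h : {i | b i = a} ∈ U) : ulim U b = a := by
  obtain ⟨i, h1, h2⟩ := Ultrafilter.nonempty_of_mem (Filter.inter_mem (ulim_mem U b) h)
  have h1' : b i = ulim U b := h1
  have h2' : b i = a := h2
  exact h1'.symm.trans h2'

private lemma ulim_congr {b c : I → A} (h : {i | b i = c i} ∈ U) :
    ulim U b = ulim U c := by
  apply ulim_eq
  refine Filter.mem_of_superset (Filter.inter_mem h (ulim_mem U c)) ?_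
  rintro i ⟨h1, h2⟩
  have h1' : b i = c i := h1
  have h2' : c i = ulim U c := h2
  exact h1'.trans h2'

private lemma ulim_map₂ (f : A → A → A) (b c : I → A) :
    ulim U (fun i => f (b i) (c i)) = f (ulim U b) (ulim U c) := by
  apply ulim_eq
  refine Filter.mem_of_superset (Filter.inter_mem (ulim_mem U b) (ulim_mem U c)) ?_
  rintro i ⟨h1, h2⟩
  have h1' : b i = ulim U b := h1
  have h2' : c i = ulim U c := h2
  show f (b i) (c i) = f (ulim U b) (ulim U c)
  rw [h1', h2']

private lemma ulim_le_ulim {b c : I → A} (h : ∀ i, b i ≤ c i) :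
    ulim U b ≤ ulim U c := by
  obtain ⟨i, h1, h2⟩ :=
    Ultrafilter.nonempty_of_mem (Filter.inter_mem (ulim_mem U b) (ulim_mem U c))
  have h1' : b i = ulim U b := h1
  have h2' : c i = ulim U c := h2
  calc ulim U b = b i := h1'.symm
    _ ≤ c i := h i
    _ = ulim U c := h2'

private lemma exists_eq_iSup {α : Type u} [Nonempty α] (f : α → A) :
    ∃ a, f a = ⨆ b, f b := by
  have hfin : (Set.range f).Finite := Set.toFinite _
  have hmem := (Set.range_nonempty f).csSup_mem hfin
  obtain ⟨a, ha⟩ := hmem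
  exact ⟨a, ha.trans (sSup_range (f := f))⟩

private lemma exists_eq_iInf {α : Type u} [Nonempty α] (f : α → A) :
    ∃ a, f a = ⨅ b, f b := by
  have hfin : (Set.range f).Finite := Set.toFinite _
  have hmem := (Set.range_nonempty f).csInf_mem hfin
  obtain ⟨a, ha⟩ := hmem
  exact ⟨a, ha.trans (sInf_range (f := f))⟩

/-- The setoid of `U`-almost-everywhere equality on a product of domains. -/
private def prodSetoid (D : I → Type u) : Setoid (∀ i, D i) where
  r f g := {i | f i = g i} ∈ U
  iseqv := by
    refine ⟨fun f => ?_, fun h => ?_, fun h1 h2 => ?_⟩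
    · exact Filter.univ_mem' fun i => rfl
    · refine Filter.mem_of_superset h fun i hi => ?_
      have hi' : _ = _ := hi
      exact hi'.symm
    · refine Filter.mem_of_superset (Filter.inter_mem h1 h2) ?_
      rintro i ⟨ha, hb⟩
      have ha' : _ = _ := ha
      have hb' : _ = _ := hb
      exact ha'.trans hb'

variable (Ms : I → Structure L A)

/-- The ultraproduct structure. -/
private def uStruct : Structure L A where
  Dom := Quotient (prodSetoid U (fun i => (Ms i).Dom))
  dom_nonempty := ⟨Quotient.mk _ fun i => Classical.choice (Ms i).dom_nonempty⟩
  funMap f d := Quotient.mk _ fun i => (Ms i).funMap f fun k => (d k).out i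
  relMap P d := ulim U fun i => (Ms i).relMap P fun k => (d k).out i

private lemma out_ae (g : ∀ i, (Ms i).Dom) :
    {i | (Quotient.mk (prodSetoid U fun i => (Ms i).Dom) g).out i = g i} ∈ U := by
  have h := Quotient.exact
    (Quotient.out_eq (Quotient.mk (prodSetoid U fun i => (Ms i).Dom) g))
  exact h

private lemma term_val_eq (v : ℕ → ∀ i, (Ms i).Dom) (t : Term L) :
    t.val (uStruct U Ms) (fun n => Quotient.mk _ (v n)) =
      Quotient.mk _ (fun i => t.val (Ms i) fun n => v n i) := by
  induction t with
  | var n => rfl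
  | func f ts ih =>
    show Quotient.mk _ _ = _
    apply Quotient.sound
    have hmem : (⋂ k, {i | (Quotient.mk (prodSetoid U fun i => (Ms i).Dom)
        (fun i => (ts k).val (Ms i) fun n => v n i)).out i
          = (fun i => (ts k).val (Ms i) fun n => v n i) i}) ∈ U :=
      Filter.iInter_mem.mpr fun k => out_ae U Ms _
    refine Filter.mem_of_superset hmem ?_
    intro i hi
    simp only [Set.mem_iInter, Set.mem_setOf_eq] at hi
    show (Ms i).funMap f _ = (Ms i).funMap f _
    refine congrArg _ (funext fun k => ?_)
    show (Term.val (uStruct U Ms) (fun n => Quotient.mk _ (v n)) (ts k)).out i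
      = Term.val (Ms i) (fun n => v n i) (ts k)
    rw [ih k]
    exact hi k

private lemma update_coord (v : ℕ → ∀ i, (Ms i).Dom) (x : ℕ) (g : ∀ i, (Ms i).Dom)
    (i : I) :
    (fun n => Function.update v x g n i) = Function.update (fun n => v n i) x (g i) := by
  funext n
  rcases eq_or_ne n x with hn | hn
  · subst hn; simp
  · simp [Function.update_of_ne hn]

private lemma update_mk (v : ℕ → ∀ i, (Ms i).Dom) (x : ℕ) (g : ∀ i, (Ms i).Dom) :
    Function.update (fun n => Quotient.mk (prodSetoid U fun i => (Ms i).Dom) (v n)) x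
        (Quotient.mk _ g)
      = fun n => Quotient.mk _ (Function.update v x g n) := by
  funext n
  rcases eq_or_ne n x with hn | hn
  · subst hn; simp
  · simp [Function.update_of_ne hn]

/-- Łoś's theorem for the finite-valued ultraproduct. -/
private lemma los (ψ : Formula L) : ∀ v : ℕ → ∀ i, (Ms i).Dom,
    ψ.val (uStruct U Ms) (fun n => Quotient.mk _ (v n)) =
      ulim U fun i => ψ.val (Ms i) fun n => v n i := by
  induction ψ with
  | rel P ts =>
    intro v
    show ulim U _ = ulim U _
    apply ulim_congr
    have hmem : (⋂ k, {i | (Quotient.mk (prodSetoid U fun i => (Ms i).Dom)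
        (fun i => (ts k).val (Ms i) fun n => v n i)).out i
          = (ts k).val (Ms i) fun n => v n i}) ∈ U :=
      Filter.iInter_mem.mpr fun k => out_ae U Ms _
    refine Filter.mem_of_superset hmem ?_
    intro i hi
    simp only [Set.mem_iInter, Set.mem_setOf_eq] at hi
    show (Ms i).relMap P _ = (Ms i).relMap P _
    refine congrArg _ (funext fun k => ?_)
    show (Term.val (uStruct U Ms) (fun n => Quotient.mk _ (v n)) (ts k)).out i
      = Term.val (Ms i) (fun n => v n i) (ts k)
    rw [term_val_eq U Ms v (ts k)]
    exact hi k
  | eq t₁ t₂ =>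
    intro v
    show (if _ = _ then (1 : A) else ⊥) = _
    rw [term_val_eq U Ms v t₁, term_val_eq U Ms v t₂]
    by_cases h : {i | t₁.val (Ms i) (fun n => v n i) = t₂.val (Ms i) fun n => v n i} ∈ U
    · erw [if_pos (Quotient.sound h)]
      refine (ulim_eq U ?_).symm
      refine Filter.mem_of_superset h ?_
      intro i hi
      simp only [Set.mem_setOf_eq] at hi ⊢
      simp only [Formula.val, hi, if_pos]
    · erw [if_neg fun hq => h (Quotient.exact (s := prodSetoid U fun i => (Ms i).Dom)
          (a := fun i => t₁.val (Ms i) fun n => v n i) (b := fun i => t₂.val (Ms i) fun n => v n i) hq)]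
      refine (ulim_eq U ?_).symm
      refine Filter.mem_of_superset (Ultrafilter.compl_mem_iff_notMem.mpr h) ?_
      intro i hi
      simp only [Set.mem_compl_iff, Set.mem_setOf_eq] at hi
      simp only [Set.mem_setOf_eq, Formula.val, if_neg hi]
  | sconj φ ψ ihφ ihψ =>
    intro v
    show φ.val _ _ * ψ.val _ _ = _
    rw [ihφ v, ihψ v]
    exact (ulim_map₂ U (· * ·) _ _).symm
  | wconj φ ψ ihφ ihψ =>
    intro v
    show φ.val _ _ ⊓ ψ.val _ _ = _
    rw [ihφ v, ihψ v]
    exact (ulim_map₂ U (· ⊓ ·) _ _).symm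
  | wdisj φ ψ ihφ ihψ =>
    intro v
    show φ.val _ _ ⊔ ψ.val _ _ = _
    rw [ihφ v, ihψ v]
    exact (ulim_map₂ U (· ⊔ ·) _ _).symm
  | impl φ ψ ihφ ihψ =>
    intro v
    show MTLChain.resid (φ.val _ _) (ψ.val _ _) = _
    rw [ihφ v, ihψ v]
    exact (ulim_map₂ U MTLChain.resid _ _).symm
  | all x φ ih =>
    intro v
    show (⨅ c, φ.val (uStruct U Ms) (Function.update _ x c)) = _
    apply le_antisymm
    · choose g hg using fun i =>
        exists_eq_iInf fun a => φ.val (Ms i) (Function.update (fun n => v n i) x a)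
      have key : φ.val (uStruct U Ms)
          (Function.update (fun n => Quotient.mk _ (v n)) x (Quotient.mk _ g))
            = ulim U fun i => φ.val (Ms i) (Function.update (fun n => v n i) x (g i)) := by
        erw [update_mk, ih]
        congr 1
        funext i
        rw [update_coord]
      calc (⨅ c, φ.val (uStruct U Ms) (Function.update (fun n => Quotient.mk _ (v n)) x c))
          ≤ _ := iInf_le _ (Quotient.mk _ g)
        _ = ulim U fun i => φ.val (Ms i) (Function.update (fun n => v n i) x (g i)) := key
        _ = ulim U fun i => Formula.val (Ms i) (.all x φ) fun n => v n i := by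
            apply ulim_congr
            refine Filter.univ_mem' fun i => ?_
            show _ = Formula.val (Ms i) (.all x φ) fun n => v n i
            exact hg i
    · refine le_iInf fun c => ?_
      have hc : c = Quotient.mk _ c.out := (Quotient.out_eq c).symm
      erw [hc, update_mk, ih]
      refine ulim_le_ulim U fun i => ?_
      show Formula.val (Ms i) (.all x φ) _ ≤ _
      refine le_trans (iInf_le _ (c.out i)) ?_
      rw [update_coord]
  | ex x φ ih =>
    intro v
    show (⨆ c, φ.val (uStruct U Ms) (Function.update _ x c)) = _
    apply le_antisymm
    · refine iSup_le fun c => ?_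
      have hc : c = Quotient.mk _ c.out := (Quotient.out_eq c).symm
      erw [hc, update_mk, ih]
      refine ulim_le_ulim U fun i => ?_
      show _ ≤ Formula.val (Ms i) (.ex x φ) _
      refine le_trans ?_ (le_iSup _ (c.out i))
      rw [update_coord]
    · choose g hg using fun i =>
        exists_eq_iSup fun a => φ.val (Ms i) (Function.update (fun n => v n i) x a)
      have key : φ.val (uStruct U Ms)
          (Function.update (fun n => Quotient.mk _ (v n)) x (Quotient.mk _ g))
            = ulim U fun i => φ.val (Ms i) (Function.update (fun n => v n i) x (g i)) := by
        erw [update_mk, ih]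
        congr 1
        funext i
        rw [update_coord]
      calc ulim U (fun i => Formula.val (Ms i) (.ex x φ) fun n => v n i)
          = ulim U fun i => φ.val (Ms i) (Function.update (fun n => v n i) x (g i)) := by
            apply ulim_congr
            refine Filter.univ_mem' fun i => ?_
            exact (hg i).symm
        _ = φ.val (uStruct U Ms)
              (Function.update (fun n => Quotient.mk _ (v n)) x (Quotient.mk _ g)) := key.symm
        _ ≤ _ := le_iSup (fun c => Formula.val (uStruct U Ms) φ
              (Function.update (fun n => Quotient.mk _ (v n)) x c)) (Quotient.mk _ g)

end UProdAux

/-- **A-compactness for consequence.**  If `Sig ⊨_A φ`, then there is a finite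
subset `S₀ ⊆ Sig` such that `S₀ ⊨_A φ`. -/
theorem A_compactness_consequence (A : Type u) [MTLChain A] (L : Lang.{u})
    (Sig : Set (Formula L)) (φ : Formula L)
    (hsent : ∀ σ ∈ Sig, σ.IsSentence) (hφ : φ.IsSentence)
    (h : ∀ M : Structure L A, Models M Sig → Valid M φ) :
    ∃ S₀ : Finset (Formula L), ↑S₀ ⊆ Sig ∧
      ∀ M : Structure L A, Models M (↑S₀ : Set (Formula L)) → Valid M φ := by
  by_contra hcon
  push_neg at hcon
  haveI : Nonempty {S : Finset (Formula L) // ↑S ⊆ Sig} := ⟨⟨∅, by simp⟩⟩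
  set I := {S : Finset (Formula L) // ↑S ⊆ Sig} with hI
  let F : Filter I := ⨅ S : I, Filter.principal {T : I | S.1 ⊆ T.1}
  have hFne : F.NeBot := by
    apply Filter.iInf_neBot_of_directed
    · intro S S'
      refine ⟨⟨S.1 ∪ S'.1, by
        rw [Finset.coe_union]
        exact Set.union_subset S.2 S'.2⟩, ?_, ?_⟩
      · exact Filter.principal_mono.mpr fun T hT =>
          Finset.union_subset_left (Set.mem_setOf_eq ▸ hT)
      · exact Filter.principal_mono.mpr fun T hT =>
          Finset.union_subset_right (Set.mem_setOf_eq ▸ hT)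
    · intro S
      exact Filter.principal_neBot_iff.mpr ⟨S, Finset.Subset.refl _⟩
  let U : Ultrafilter I := Ultrafilter.of F
  have hU : ∀ S : I, {T : I | S.1 ⊆ T.1} ∈ U := fun S =>
    Ultrafilter.of_le F (Filter.mem_iInf_of_mem S (Filter.mem_principal_self _))
  choose Ms hMs1 hMs2 using fun S : I => hcon S.1 S.2
  have hmodels : Models (uStruct U Ms) Sig := by
    intro σ hσ w
    have hw : w = fun n => Quotient.mk _ (fun i => (w n).out i) := by
      funext n
      exact (Quotient.out_eq (w n)).symm
    rw [hw, los U Ms σ]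
    apply ulim_eq
    refine Filter.mem_of_superset (hU ⟨{σ}, by simp [hσ]⟩) ?_
    intro T hT
    simp only [Set.mem_setOf_eq, Finset.singleton_subset_iff] at hT
    exact hMs1 T σ hT _
  have hval := h (uStruct U Ms) hmodels
  have hvv : ∀ S : I, ∃ v : ℕ → (Ms S).Dom, φ.val (Ms S) v ≠ 1 := fun S => by
    have := hMs2 S
    rwa [Valid, not_forall] at this
  choose vS hvS using hvv
  have h1 : φ.val (uStruct U Ms) (fun n => Quotient.mk _ (fun S => vS S n)) = 1 :=
    hval _
  rw [los U Ms φ] at h1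
  have hm : {S | φ.val (Ms S) (fun n => vS S n) = 1} ∈ U := by
    have := ulim_mem U fun S => φ.val (Ms S) fun n => vS S n
    rwa [h1] at this
  obtain ⟨S, hS⟩ := Ultrafilter.nonempty_of_mem hm
  have hS' : φ.val (Ms S) (fun n => vS S n) = 1 := hS
  exact hvS S hS'
end
end

section
/- (Theorem 4.1: axiomatization by pp-sentences.) Let A be a fixed finite MTL-chain, P a predicate language, and T a set of P-sentences that has an A-model. Then T is closed under homomorphisms and closed under A-direct products if and only if T is axiomatized by a set of positive-primitive P-sentences. -/
noncomputable section
open Classical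

universe u

variable {A : Type u} [MTLChain A] {L : Lang.{u}}

/-! ### Auxiliary lemmas -/

section Aux

variable {A : Type u} [MTLChain A] {L : Lang.{u}}

lemma MTL.le_one (a : A) : a ≤ 1 := (MTLChain.one_eq_top (A := A)) ▸ le_top

lemma MTL.trivial_of_one_eq_bot (h : (1 : A) = ⊥) (a : A) : a = 1 :=
  le_antisymm (MTL.le_one a) (h ▸ bot_le)

lemma MTL.mul_le_left (a b : A) : a * b ≤ a := by
  calc a * b ≤ a * 1 := MTLChain.mul_mono (MTL.le_one b) a
  _ = a := mul_one a

lemma MTL.mul_le_right (a b : A) : a * b ≤ b := by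
  rw [mul_comm]; exact MTL.mul_le_left b a

lemma MTL.mul_eq_one_iff {a b : A} : a * b = 1 ↔ a = 1 ∧ b = 1 := by
  constructor
  · intro h
    exact ⟨le_antisymm (MTL.le_one a) (h ▸ MTL.mul_le_left a b),
      le_antisymm (MTL.le_one b) (h ▸ MTL.mul_le_right a b)⟩
  · rintro ⟨rfl, rfl⟩; exact mul_one 1

lemma MTL.inf_eq_one_iff {a b : A} : a ⊓ b = 1 ↔ a = 1 ∧ b = 1 := by
  rw [MTLChain.one_eq_top (A := A), inf_eq_top_iff]

lemma MTL.iInf_eq_one_iff {ι : Sort*} {f : ι → A} : (⨅ i, f i) = 1 ↔ ∀ i, f i = 1 := by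
  rw [MTLChain.one_eq_top (A := A)]
  simp [iInf_eq_top]

/-- In a finite linear order, suprema are attained. -/
lemma MTL.exists_eq_iSup {ι : Type*} [Nonempty ι] (f : ι → A) : ∃ i, f i = ⨆ j, f j := by
  have h1 : (Set.range f).Nonempty := Set.range_nonempty f
  have h2 : (Set.range f).Finite := Set.toFinite _
  have := h1.csSup_mem h2
  rw [← sSup_range (f := f)] at *
  obtain ⟨i, hi⟩ := this
  exact ⟨i, hi⟩

lemma MTL.exists_eq_iInf {ι : Type*} [Nonempty ι] (f : ι → A) : ∃ i, f i = ⨅ j, f j := by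
  have h1 : (Set.range f).Nonempty := Set.range_nonempty f
  have h2 : (Set.range f).Finite := Set.toFinite _
  have := h1.csInf_mem h2
  rw [← sInf_range (f := f)] at *
  obtain ⟨i, hi⟩ := this
  exact ⟨i, hi⟩

lemma MTL.iSup_eq_one_iff {ι : Type*} [Nonempty ι] {f : ι → A} :
    (⨆ i, f i) = 1 ↔ ∃ i, f i = 1 := by
  constructor
  · intro h
    obtain ⟨i, hi⟩ := MTL.exists_eq_iSup f
    exact ⟨i, hi.trans h⟩
  · rintro ⟨i, hi⟩
    exact le_antisymm (MTL.le_one _) (hi ▸ le_iSup f i)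


/-! ### Values depend only on free variables -/

lemma Term.val_congr {M : Structure L A} {v w : ℕ → M.Dom} :
    ∀ {t : Term L}, (∀ n ∈ t.fvars, v n = w n) → t.val M v = t.val M w := by
  intro t
  induction t with
  | var n => intro h; exact h n (by simp [Term.fvars])
  | func f ts ih =>
    intro h
    simp only [Term.val]
    congr 1
    funext i
    exact ih i fun n hn => h n (Set.mem_iUnion.2 ⟨i, hn⟩)

lemma Formula.val_congr {M : Structure L A} :
    ∀ {φ : Formula L} {v w : ℕ → M.Dom}, (∀ n ∈ φ.fvars, v n = w n) →
      φ.val M v = φ.val M w := by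
  intro φ
  induction φ with
  | rel P ts =>
    intro v w h
    simp only [Formula.val]
    congr 1
    funext i
    exact Term.val_congr fun n hn => h n (Set.mem_iUnion.2 ⟨i, hn⟩)
  | eq t₁ t₂ =>
    intro v w h
    simp only [Formula.val]
    rw [Term.val_congr (v := v) (w := w) fun n hn => h n (Or.inl hn),
        Term.val_congr (v := v) (w := w) fun n hn => h n (Or.inr hn)]
  | sconj φ ψ ihφ ihψ =>
    intro v w h
    simp only [Formula.val]
    rw [ihφ fun n hn => h n (Or.inl hn), ihψ fun n hn => h n (Or.inr hn)]
  | wconj φ ψ ihφ ihψ =>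
    intro v w h
    simp only [Formula.val]
    rw [ihφ fun n hn => h n (Or.inl hn), ihψ fun n hn => h n (Or.inr hn)]
  | wdisj φ ψ ihφ ihψ =>
    intro v w h
    simp only [Formula.val]
    rw [ihφ fun n hn => h n (Or.inl hn), ihψ fun n hn => h n (Or.inr hn)]
  | impl φ ψ ihφ ihψ =>
    intro v w h
    simp only [Formula.val]
    rw [ihφ fun n hn => h n (Or.inl hn), ihψ fun n hn => h n (Or.inr hn)]
  | all x φ ih =>
    intro v w h
    simp only [Formula.val]
    congr 1
    funext a
    refine ih fun n hn => ?_
    by_cases hx : n = x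
    · subst hx; simp [Function.update]
    · simp only [Function.update, dif_neg hx]
      exact h n ⟨hn, hx⟩
  | ex x φ ih =>
    intro v w h
    simp only [Formula.val]
    congr 1
    funext a
    refine ih fun n hn => ?_
    by_cases hx : n = x
    · subst hx; simp [Function.update]
    · simp only [Function.update, dif_neg hx]
      exact h n ⟨hn, hx⟩

/-- For a sentence, validity is equivalent to truth under any single evaluation. -/
lemma Formula.valid_iff_val_one {M : Structure L A} {φ : Formula L}
    (hφ : φ.IsSentence) (v : ℕ → M.Dom) : Valid M φ ↔ φ.val M v = 1 := by
  constructor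
  · intro h; exact h v
  · intro h w
    rw [Formula.val_congr (v := w) (w := v) fun n hn => by
      rw [Formula.IsSentence] at hφ; simp [hφ] at hn]
    exact h

/-! ### Homomorphisms preserve pp-formulas -/

lemma Term.val_hom {M N : Structure L A} {g : M.Dom → N.Dom} (hg : IsHom M N g)
    (v : ℕ → M.Dom) : ∀ t : Term L, g (t.val M v) = t.val N (g ∘ v) := by
  intro t
  induction t with
  | var n => rfl
  | func f ts ih =>
    simp only [Term.val]
    rw [hg.map_fun]
    congr 1
    funext i
    exact ih i

lemma IsPP.val_hom {M N : Structure L A} {g : M.Dom → N.Dom} (hg : IsHom M N g) :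
    ∀ {φ : Formula L}, IsPP φ → ∀ v : ℕ → M.Dom,
      φ.val M v = 1 → φ.val N (g ∘ v) = 1 := by
  intro φ hφ
  induction hφ with
  | base hq =>
    induction hq with
    | atom ha =>
      cases ha with
      | rel P ts =>
        intro v h
        simp only [Formula.val] at h ⊢
        have : (fun i => (ts i).val N (g ∘ v)) = g ∘ (fun i => (ts i).val M v) := by
          funext i; exact (Term.val_hom hg v (ts i)).symm
        rw [this]
        exact hg.map_rel P _ h
      | eq t₁ t₂ =>
        intro v h
        simp only [Formula.val] at h ⊢
        by_cases hb : (1 : A) = ⊥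
        · exact (MTL.trivial_of_one_eq_bot hb _)
        · have ht : t₁.val M v = t₂.val M v := by
            by_contra hne
            rw [if_neg hne] at h
            exact hb h.symm
          rw [if_pos (by rw [← Term.val_hom hg v t₁, ← Term.val_hom hg v t₂, ht])]
    | sconj h₁ h₂ ih₁ ih₂ =>
      intro v h
      simp only [Formula.val] at h ⊢
      obtain ⟨ha, hb⟩ := MTL.mul_eq_one_iff.1 h
      rw [ih₁ v ha, ih₂ v hb, mul_one]
    | wconj h₁ h₂ ih₁ ih₂ =>
      intro v h
      simp only [Formula.val] at h ⊢
      obtain ⟨ha, hb⟩ := MTL.inf_eq_one_iff.1 h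
      rw [ih₁ v ha, ih₂ v hb, inf_idem]
  | ex x hφ' ih =>
    intro v h
    simp only [Formula.val] at h ⊢
    obtain ⟨a, ha⟩ := MTL.iSup_eq_one_iff.1 h
    refine MTL.iSup_eq_one_iff.2 ⟨g a, ?_⟩
    have : g ∘ Function.update v x a = Function.update (g ∘ v) x (g a) := by
      funext n
      by_cases hx : n = x
      · subst hx; simp [Function.update]
      · simp [Function.update, hx]
    rw [← this]
    exact ih _ ha


/-! ### Direct products -/

lemma Term.val_dirProd {I : Type u} [Nonempty I] (Ms : I → Structure L A)
    (v : ℕ → (dirProd Ms).Dom) (t : Term L) (i : I) :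
    t.val (dirProd Ms) v i = t.val (Ms i) (fun n => v n i) := by
  induction t with
  | var n => rfl
  | func f ts ih =>
    show (Ms i).funMap f (fun k => (ts k).val (dirProd Ms) v i) = _
    simp only [Term.val]
    congr 1
    funext k
    exact ih k

/-- The projections of a direct product are homomorphisms. -/
lemma dirProd_proj_isHom {I : Type u} [Nonempty I] (Ms : I → Structure L A) (i : I) :
    IsHom (dirProd Ms) (Ms i) (fun d => d i) where
  map_fun f d := rfl
  map_rel P d h := by
    have : (⨅ j, (Ms j).relMap P fun k => d k j) = 1 := h
    exact MTL.iInf_eq_one_iff.1 this i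

/-- pp-formulas pass to direct products. -/
lemma IsPP.val_dirProd {I : Type u} [Nonempty I] {Ms : I → Structure L A} :
    ∀ {φ : Formula L}, IsPP φ → ∀ v : ℕ → (dirProd Ms).Dom,
      (∀ i, φ.val (Ms i) (fun n => v n i) = 1) → φ.val (dirProd Ms) v = 1 := by
  intro φ hφ
  induction hφ with
  | base hq =>
    induction hq with
    | atom ha =>
      cases ha with
      | rel P ts =>
        intro v h
        show (⨅ i, (Ms i).relMap P fun k => (ts k).val (dirProd Ms) v i) = 1
        refine MTL.iInf_eq_one_iff.2 fun i => ?_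
        have := h i
        simp only [Formula.val] at this
        convert this using 2
        funext k
        exact Term.val_dirProd Ms v (ts k) i
      | eq t₁ t₂ =>
        intro v h
        simp only [Formula.val] at h ⊢
        by_cases hb : (1 : A) = ⊥
        · exact (MTL.trivial_of_one_eq_bot hb _)
        · refine if_pos (funext fun i => ?_)
          have := h i
          have ht : t₁.val (Ms i) (fun n => v n i) = t₂.val (Ms i) (fun n => v n i) := by
            by_contra hne
            rw [if_neg hne] at this
            exact hb this.symm
          rw [Term.val_dirProd, Term.val_dirProd]
          exact ht
    | sconj h₁ h₂ ih₁ ih₂ =>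
      intro v h
      simp only [Formula.val] at h ⊢
      rw [ih₁ v (fun i => (MTL.mul_eq_one_iff.1 (h i)).1),
          ih₂ v (fun i => (MTL.mul_eq_one_iff.1 (h i)).2), mul_one]
    | wconj h₁ h₂ ih₁ ih₂ =>
      intro v h
      simp only [Formula.val] at h ⊢
      rw [ih₁ v (fun i => (MTL.inf_eq_one_iff.1 (h i)).1),
          ih₂ v (fun i => (MTL.inf_eq_one_iff.1 (h i)).2), inf_idem]
  | ex x hφ' ih =>
    intro v h
    simp only [Formula.val] at h ⊢
    choose a ha using fun i => MTL.iSup_eq_one_iff.1 (h i)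
    refine MTL.iSup_eq_one_iff.2 ⟨a, ih _ fun i => ?_⟩
    have : (fun n => Function.update v x a n i) =
        Function.update (fun n => v n i) x (a i) := by
      funext n
      by_cases hx : n = x
      · subst hx; simp [Function.update]
      · simp [Function.update, hx]
    rw [this]
    exact ha i

/-- The easy direction: a theory axiomatized by pp-sentences is closed under
homomorphisms and direct products. -/
lemma pp_axioms_closed {T : Set (Formula L)}
    (Sig : Set (Formula L)) (hSig : ∀ σ ∈ Sig, IsPP σ ∧ σ.IsSentence)
    (hax : ∀ M : Structure L A, Models M T ↔ Models M Sig) :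
    (∀ (M N : Structure L A) (g : M.Dom → N.Dom),
        IsHom M N g → Models M T → Models N T) ∧
    (∀ (I : Type u) [Nonempty I] (Ms : I → Structure L A),
        (∀ i, Models (Ms i) T) → Models (dirProd Ms) T) := by
  constructor
  · intro M N g hg hM
    refine (hax N).2 fun σ hσ => ?_
    obtain ⟨hpp, hsen⟩ := hSig σ hσ
    have hMσ : Valid M σ := (hax M).1 hM σ hσ
    refine (Formula.valid_iff_val_one hsen (g ∘ fun _ => Classical.ofNonempty)).2 ?_
    exact hpp.val_hom hg _ (hMσ _)
  · intro I _ Ms hMs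
    refine (hax _).2 fun σ hσ => ?_
    obtain ⟨hpp, _⟩ := hSig σ hσ
    intro v
    exact hpp.val_dirProd v fun i => (hax (Ms i)).1 (hMs i) σ hσ _


/-! ### Finiteness of free variables -/

lemma Term.fvars_finite : ∀ t : Term L, t.fvars.Finite := by
  intro t
  induction t with
  | var n => exact Set.finite_singleton n
  | func f ts ih => exact Set.finite_iUnion ih

lemma IsAtomicFormula.fvars_finite {φ : Formula L} (h : IsAtomicFormula φ) :
    φ.fvars.Finite := by
  cases h with
  | rel P ts => exact Set.finite_iUnion fun i => (ts i).fvars_finite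
  | eq t₁ t₂ => exact (Term.fvars_finite t₁).union (Term.fvars_finite t₂)

/-! ### Renaming of variables (used only on atomic formulas) -/

def Term.rename (ρ : ℕ → ℕ) : Term L → Term L
  | .var n => .var (ρ n)
  | .func f ts => .func f fun i => (ts i).rename ρ

def Formula.rename (ρ : ℕ → ℕ) : Formula L → Formula L
  | .rel P ts => .rel P fun i => (ts i).rename ρ
  | .eq t₁ t₂ => .eq (t₁.rename ρ) (t₂.rename ρ)
  | .sconj φ ψ => .sconj (φ.rename ρ) (ψ.rename ρ)
  | .wconj φ ψ => .wconj (φ.rename ρ) (ψ.rename ρ)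
  | .wdisj φ ψ => .wdisj (φ.rename ρ) (ψ.rename ρ)
  | .impl φ ψ => .impl (φ.rename ρ) (ψ.rename ρ)
  | .all x φ => .all (ρ x) (φ.rename ρ)
  | .ex x φ => .ex (ρ x) (φ.rename ρ)

lemma Term.val_rename {M : Structure L A} (ρ : ℕ → ℕ) (v : ℕ → M.Dom) :
    ∀ t : Term L, (t.rename ρ).val M v = t.val M (v ∘ ρ) := by
  intro t
  induction t with
  | var n => rfl
  | func f ts ih =>
    simp only [Term.rename, Term.val]
    congr 1
    funext i
    exact ih i

lemma Term.fvars_rename (ρ : ℕ → ℕ) : ∀ t : Term L, (t.rename ρ).fvars = ρ '' t.fvars := by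
  intro t
  induction t with
  | var n => simp [Term.rename, Term.fvars]
  | func f ts ih =>
    simp only [Term.rename, Term.fvars, Set.image_iUnion]
    exact Set.iUnion_congr ih

lemma IsAtomicFormula.rename {ρ : ℕ → ℕ} {φ : Formula L} (h : IsAtomicFormula φ) :
    IsAtomicFormula (φ.rename ρ) := by
  cases h with
  | rel P ts => exact .rel P _
  | eq t₁ t₂ => exact .eq _ _

lemma IsAtomicFormula.val_rename {M : Structure L A} {ρ : ℕ → ℕ} {φ : Formula L}
    (h : IsAtomicFormula φ) (v : ℕ → M.Dom) :
    (φ.rename ρ).val M v = φ.val M (v ∘ ρ) := by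
  cases h with
  | rel P ts =>
    simp only [Formula.rename, Formula.val]
    congr 1
    funext i
    exact Term.val_rename ρ v (ts i)
  | eq t₁ t₂ =>
    simp only [Formula.rename, Formula.val]
    rw [Term.val_rename, Term.val_rename]

lemma IsAtomicFormula.fvars_rename {ρ : ℕ → ℕ} {φ : Formula L} (h : IsAtomicFormula φ) :
    (φ.rename ρ).fvars = ρ '' φ.fvars := by
  cases h with
  | rel P ts =>
    simp only [Formula.rename, Formula.fvars, Set.image_iUnion]
    exact Set.iUnion_congr fun i => Term.fvars_rename ρ (ts i)
  | eq t₁ t₂ =>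
    simp only [Formula.rename, Formula.fvars, Set.image_union]
    rw [Term.fvars_rename, Term.fvars_rename]

/-! ### Finite weak conjunctions and existential closures -/

/-- Weak conjunction of a list of formulas (with a trivially true atom as unit). -/
def conjList (l : List (Formula L)) : Formula L :=
  l.foldr .wconj (.eq (.var 0) (.var 0))

lemma conjList_qfconj {l : List (Formula L)} (h : ∀ φ ∈ l, IsAtomicFormula φ) :
    QFConj (conjList l) := by
  induction l with
  | nil => exact .atom (.eq _ _)
  | cons φ l ih =>
    exact .wconj (.atom (h φ (by simp))) (ih fun ψ hψ => h ψ (by simp [hψ]))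

lemma conjList_fvars {l : List (Formula L)} :
    (conjList l).fvars ⊆ {0} ∪ ⋃ φ ∈ l, φ.fvars := by
  induction l with
  | nil =>
    intro n hn
    rcases hn with h | h
    · exact Or.inl h
    · exact Or.inl h
  | cons φ l ih =>
    intro n hn
    rcases hn with h | h
    · exact Or.inr (Set.mem_biUnion List.mem_cons_self h)
    · rcases ih h with h' | h'
      · exact Or.inl h'
      · simp only [Set.mem_iUnion] at h'
        obtain ⟨ψ, hψ, hn'⟩ := h'
        exact Or.inr (Set.mem_biUnion (List.mem_cons_of_mem φ hψ) hn')

lemma conjList_val_eq_one {M : Structure L A} {l : List (Formula L)} (v : ℕ → M.Dom) :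
    (conjList l).val M v = 1 ↔ ∀ φ ∈ l, φ.val M v = 1 := by
  induction l with
  | nil =>
    show (if (Term.var 0).val M v = (Term.var 0).val M v then (1 : A) else ⊥) = 1 ↔ _
    rw [if_pos rfl]
    simp
  | cons φ l ih =>
    show (φ.val M v ⊓ (conjList l).val M v) = 1 ↔ _
    rw [MTL.inf_eq_one_iff, ih]
    constructor
    · rintro ⟨h₁, h₂⟩ ψ hψ
      rcases List.mem_cons.1 hψ with rfl | hψ
      · exact h₁
      · exact h₂ ψ hψ
    · intro h
      exact ⟨h φ (by simp), fun ψ hψ => h ψ (by simp [hψ])⟩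

/-- Existential closure over a list of variables. -/
def exClose (ns : List ℕ) (φ : Formula L) : Formula L := ns.foldr .ex φ

lemma exClose_isPP {ns : List ℕ} {φ : Formula L} (h : QFConj φ) : IsPP (exClose ns φ) := by
  induction ns with
  | nil => exact .base h
  | cons x ns ih => exact .ex x ih

lemma exClose_fvars {ns : List ℕ} {φ : Formula L} :
    (exClose ns φ).fvars = φ.fvars \ {n | n ∈ ns} := by
  induction ns with
  | nil => simp [exClose]
  | cons x ns ih =>
    show (Formula.ex x (exClose ns φ)).fvars = _
    simp only [Formula.fvars, ih]
    ext n
    simp only [Set.mem_diff, Set.mem_setOf_eq, Set.mem_singleton_iff, List.mem_cons]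
    tauto

lemma exClose_val_eq_one {M : Structure L A} {ns : List ℕ} {φ : Formula L} (v : ℕ → M.Dom) :
    (exClose ns φ).val M v = 1 ↔
      ∃ w : ℕ → M.Dom, (∀ n, n ∉ ns → w n = v n) ∧ φ.val M w = 1 := by
  induction ns generalizing v with
  | nil =>
    show φ.val M v = 1 ↔ _
    constructor
    · intro h; exact ⟨v, fun n _ => rfl, h⟩
    · rintro ⟨w, hw, h⟩
      have : w = v := funext fun n => hw n List.not_mem_nil
      rwa [this] at h
  | cons x ns ih =>
    show (⨆ a, (exClose ns φ).val M (Function.update v x a)) = 1 ↔ _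
    rw [MTL.iSup_eq_one_iff]
    constructor
    · rintro ⟨a, ha⟩
      obtain ⟨w, hw, h⟩ := (ih _).1 ha
      refine ⟨w, fun n hn => ?_, h⟩
      have hx : n ≠ x := fun h' => hn (h' ▸ (List.mem_cons_self : x ∈ x :: ns))
      have hn' : n ∉ ns := fun h' => hn (List.mem_cons_of_mem x h')
      rw [hw n hn', Function.update, dif_neg hx]
    · rintro ⟨w, hw, h⟩
      refine ⟨w x, (ih _).2 ⟨w, fun n hn => ?_, h⟩⟩
      by_cases hx : n = x
      · subst hx; simp [Function.update]
      · rw [Function.update, dif_neg hx]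
        exact hw n (by simp [hx, hn])


/-! ### Ultrafilter limits in a finite chain -/

section Ultra

variable {J : Type u} (U : Ultrafilter J)

lemma exists_limU (f : J → A) : ∃ a : A, {i | f i = a} ∈ U := by
  by_contra h
  push_neg at h
  have h' : ∀ a : A, {i | f i = a}ᶜ ∈ U :=
    fun a => Ultrafilter.compl_mem_iff_notMem.2 (h a)
  have hmem : (⋂ a : A, {i | f i = a}ᶜ) ∈ U := Filter.iInter_mem.2 h'
  have hempty : (⋂ a : A, {i | f i = a}ᶜ) = ∅ := by
    ext i
    simp only [Set.mem_iInter, Set.mem_compl_iff, Set.mem_setOf_eq, Set.mem_empty_iff_false,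
      iff_false, not_forall, not_not]
    exact ⟨f i, rfl⟩
  rw [hempty] at hmem
  exact Filter.empty_notMem (U : Filter J) hmem

/-- The limit of an `A`-valued function along an ultrafilter. -/
def limU (f : J → A) : A := Classical.choose (exists_limU U f)

lemma limU_spec (f : J → A) : {i | f i = limU U f} ∈ U :=
  Classical.choose_spec (exists_limU U f)

lemma limU_eq {f : J → A} {a : A} (h : {i | f i = a} ∈ U) : limU U f = a := by
  obtain ⟨i, hi₁, hi₂⟩ := Filter.nonempty_of_mem (f := (U : Filter J))
    (Filter.inter_mem h (limU_spec U f))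
  exact hi₂.symm.trans hi₁

lemma limU_congr {f g : J → A} (h : {i | f i = g i} ∈ U) : limU U f = limU U g := by
  refine limU_eq U (Filter.mem_of_superset (Filter.inter_mem h (limU_spec U g)) ?_)
  rintro i ⟨hi₁, hi₂⟩
  exact hi₁.trans hi₂

lemma limU_const (a : A) : limU U (fun _ => a) = a := by
  refine limU_eq U ?_
  have : {i : J | a = a} = Set.univ := by ext i; simp
  rw [this]
  exact Filter.univ_mem

lemma limU_binop (op : A → A → A) (f g : J → A) :
    limU U (fun i => op (f i) (g i)) = op (limU U f) (limU U g) := by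
  refine limU_eq U (Filter.mem_of_superset
    (Filter.inter_mem (limU_spec U f) (limU_spec U g)) ?_)
  rintro i ⟨hi₁, hi₂⟩
  simp only [Set.mem_setOf_eq] at *
  rw [hi₁, hi₂]

lemma limU_mono {f g : J → A} (h : ∀ i, f i ≤ g i) : limU U f ≤ limU U g := by
  obtain ⟨i, hi₁, hi₂⟩ := Filter.nonempty_of_mem (f := (U : Filter J))
    (Filter.inter_mem (limU_spec U f) (limU_spec U g))
  simp only [Set.mem_setOf_eq] at hi₁ hi₂
  rw [← hi₁, ← hi₂]
  exact h i

lemma limU_eq_one_iff {f : J → A} : limU U f = 1 ↔ {i | f i = 1} ∈ U := by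
  constructor
  · intro h
    have := limU_spec U f
    rwa [h] at this
  · exact limU_eq U

/-! ### Ultrapowers and Łoś's theorem -/

variable (N : Structure L A)

/-- The setoid of `U`-a.e. equality. -/
def ultraSetoid : Setoid (J → N.Dom) where
  r x y := {i | x i = y i} ∈ U
  iseqv := by
    refine ⟨fun x => ?_, fun {x y} h => ?_, fun {x y z} h₁ h₂ => ?_⟩
    · have : {i : J | x i = x i} = Set.univ := by ext i; simp
      rw [this]
      exact Filter.univ_mem
    · refine Filter.mem_of_superset h fun i hi => hi.symm
    · refine Filter.mem_of_superset (Filter.inter_mem h₁ h₂) ?_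
      rintro i ⟨hi₁, hi₂⟩
      exact hi₁.trans hi₂

/-- The ultrapower of an `A`-structure. -/
def ultraPower : Structure L A where
  Dom := Quotient (ultraSetoid U N)
  dom_nonempty := ⟨⟦fun _ => Classical.ofNonempty⟧⟩
  funMap f d := ⟦fun i => N.funMap f (fun k => (d k).out i)⟧
  relMap P d := limU U (fun i => N.relMap P (fun k => (d k).out i))

lemma ultra_out_ae (x : J → N.Dom) :
    {i | (Quotient.mk (ultraSetoid U N) x).out i = x i} ∈ U :=
  Quotient.mk_out (s := ultraSetoid U N) x

lemma Term.val_ultra (V : ℕ → J → N.Dom) (t : Term L) :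
    t.val (ultraPower U N) (fun n => ⟦V n⟧) = ⟦fun i => t.val N (fun n => V n i)⟧ := by
  induction t with
  | var n => rfl
  | func f ts ih =>
    show (⟦fun i => N.funMap f (fun k => ((ts k).val (ultraPower U N) _).out i)⟧ :
      Quotient (ultraSetoid U N)) = _
    refine Quotient.sound ?_
    have hk : ∀ k, {i | ((ts k).val (ultraPower U N) (fun n => ⟦V n⟧)).out i =
        (ts k).val N (fun n => V n i)} ∈ U := by
      intro k
      rw [ih k]
      exact ultra_out_ae U N _
    refine Filter.mem_of_superset (Filter.iInter_mem.2 hk) ?_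
    intro i hi
    simp only [Set.mem_iInter, Set.mem_setOf_eq] at hi
    show N.funMap f _ = N.funMap f _
    congr 1
    funext k
    exact hi k

lemma update_mk_eq (V : ℕ → J → N.Dom) (x : ℕ) (d : Quotient (ultraSetoid U N)) :
    Function.update (fun n => (⟦V n⟧ : Quotient (ultraSetoid U N))) x d =
      fun n => ⟦Function.update V x d.out n⟧ := by
  funext n
  by_cases hx : n = x
  · subst hx
    simp [Function.update, Quotient.out_eq]
  · simp [Function.update, hx]

lemma update_proj (V : ℕ → J → N.Dom) (x : ℕ) (w : J → N.Dom) (i : J) :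
    (fun n => Function.update V x w n i) = Function.update (fun n => V n i) x (w i) := by
  funext n
  by_cases hx : n = x
  · subst hx; simp [Function.update]
  · simp [Function.update, hx]

/-- **Łoś's theorem** for finitely-valued ultrapowers. -/
lemma Formula.val_ultra :
    ∀ (φ : Formula L) (V : ℕ → J → N.Dom),
      φ.val (ultraPower U N) (fun n => ⟦V n⟧) =
        limU U (fun i => φ.val N (fun n => V n i)) := by
  intro φ
  induction φ with
  | rel P ts =>
    intro V
    show limU U (fun i => N.relMap P (fun k => ((ts k).val (ultraPower U N) _).out i))
      = limU U _
    refine limU_congr U ?_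
    have hk : ∀ k, {i | ((ts k).val (ultraPower U N) (fun n => ⟦V n⟧)).out i =
        (ts k).val N (fun n => V n i)} ∈ U := by
      intro k
      rw [Term.val_ultra]
      exact ultra_out_ae U N _
    refine Filter.mem_of_superset (Filter.iInter_mem.2 hk) ?_
    intro i hi
    simp only [Set.mem_iInter, Set.mem_setOf_eq] at hi ⊢
    show N.relMap P _ = N.relMap P _
    congr 1
    funext k
    exact hi k
  | eq t₁ t₂ =>
    intro V
    show (if t₁.val (ultraPower U N) _ = t₂.val (ultraPower U N) _ then (1:A) else ⊥) = _
    rw [Term.val_ultra, Term.val_ultra]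
    by_cases h : {i | t₁.val N (fun n => V n i) = t₂.val N (fun n => V n i)} ∈ U
    · rw [if_pos (show @Eq (ultraPower U N).Dom _ _ from Quotient.sound h)]
      refine (limU_eq U (Filter.mem_of_superset h ?_)).symm
      intro i hi
      simp only [Set.mem_setOf_eq] at hi ⊢
      simp only [Formula.val]
      rw [if_pos hi]
    · rw [if_neg (show ¬ @Eq (ultraPower U N).Dom ⟦fun i => t₁.val N (fun n => V n i)⟧
          ⟦fun i => t₂.val N (fun n => V n i)⟧ from fun hq => h (Quotient.exact hq))]
      refine (limU_eq U ?_).symm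
      have h' := (Ultrafilter.compl_mem_iff_notMem (f := U)).2 h
      refine Filter.mem_of_superset h' ?_
      intro i hi
      simp only [Set.mem_compl_iff, Set.mem_setOf_eq] at hi ⊢
      simp only [Formula.val]
      rw [if_neg hi]
  | sconj φ ψ ihφ ihψ =>
    intro V
    show φ.val (ultraPower U N) _ * ψ.val (ultraPower U N) _ = _
    rw [ihφ, ihψ, ← limU_binop U (fun a b => a * b)]
    rfl
  | wconj φ ψ ihφ ihψ =>
    intro V
    show φ.val (ultraPower U N) _ ⊓ ψ.val (ultraPower U N) _ = _
    rw [ihφ, ihψ, ← limU_binop U (fun a b => a ⊓ b)]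
    rfl
  | wdisj φ ψ ihφ ihψ =>
    intro V
    show φ.val (ultraPower U N) _ ⊔ ψ.val (ultraPower U N) _ = _
    rw [ihφ, ihψ, ← limU_binop U (fun a b => a ⊔ b)]
    rfl
  | impl φ ψ ihφ ihψ =>
    intro V
    show MTLChain.resid (φ.val (ultraPower U N) _) (ψ.val (ultraPower U N) _) = _
    rw [ihφ, ihψ, ← limU_binop U (fun a b => MTLChain.resid a b)]
    rfl
  | all x φ ih =>
    intro V
    show (⨅ d : Quotient (ultraSetoid U N), φ.val (ultraPower U N)
      (Function.update (fun n => ⟦V n⟧) x d)) = _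
    have hrhs : (fun i => Formula.val N (.all x φ) fun n => V n i) =
        fun i => ⨅ b, φ.val N (Function.update (fun n => V n i) x b) := rfl
    rw [hrhs]
    have key : ∀ d : Quotient (ultraSetoid U N), φ.val (ultraPower U N)
        (Function.update (fun n => ⟦V n⟧) x d) =
        limU U (fun i => φ.val N (Function.update (fun n => V n i) x (d.out i))) := by
      intro d
      erw [update_mk_eq, ih]
      refine limU_congr U (Filter.univ_mem' fun i => ?_)
      simp only [Set.mem_setOf_eq]
      rw [update_proj]
    refine le_antisymm ?_ ?_
    · set w : J → N.Dom := fun i =>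
        Classical.choose (MTL.exists_eq_iInf (fun b => φ.val N
          (Function.update (fun n => V n i) x b))) with hw
      have hws : ∀ i, φ.val N (Function.update (fun n => V n i) x (w i)) =
          ⨅ b, φ.val N (Function.update (fun n => V n i) x b) := fun i =>
        Classical.choose_spec (MTL.exists_eq_iInf (fun b => φ.val N
          (Function.update (fun n => V n i) x b)))
      refine le_trans (iInf_le (fun d : Quotient (ultraSetoid U N) => φ.val (ultraPower U N) (Function.update (fun n => ⟦V n⟧) x d)) ⟦w⟧) ?_
      rw [key ⟦w⟧]
      refine le_of_eq ?_
      refine (limU_congr U (Filter.mem_of_superset (ultra_out_ae U N w) fun i hi => ?_)).trans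
        (limU_congr U (Filter.univ_mem' fun i => hws i))
      simp only [Set.mem_setOf_eq] at hi ⊢
      rw [hi]
    · refine le_iInf fun d => ?_
      rw [key d]
      refine limU_mono U fun i => ?_
      exact iInf_le (fun b => φ.val N (Function.update (fun n => V n i) x b)) (d.out i)
  | ex x φ ih =>
    intro V
    show (⨆ d : Quotient (ultraSetoid U N), φ.val (ultraPower U N)
      (Function.update (fun n => ⟦V n⟧) x d)) = _
    have hrhs : (fun i => Formula.val N (.ex x φ) fun n => V n i) =
        fun i => ⨆ b, φ.val N (Function.update (fun n => V n i) x b) := rfl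
    rw [hrhs]
    have key : ∀ d : Quotient (ultraSetoid U N), φ.val (ultraPower U N)
        (Function.update (fun n => ⟦V n⟧) x d) =
        limU U (fun i => φ.val N (Function.update (fun n => V n i) x (d.out i))) := by
      intro d
      erw [update_mk_eq, ih]
      refine limU_congr U (Filter.univ_mem' fun i => ?_)
      simp only [Set.mem_setOf_eq]
      rw [update_proj]
    refine le_antisymm ?_ ?_
    · refine iSup_le fun d => ?_
      rw [key d]
      refine limU_mono U fun i => ?_
      exact le_iSup (fun b => φ.val N (Function.update (fun n => V n i) x b)) (d.out i)
    · set w : J → N.Dom := fun i =>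
        Classical.choose (MTL.exists_eq_iSup (fun b => φ.val N
          (Function.update (fun n => V n i) x b))) with hw
      have hws : ∀ i, φ.val N (Function.update (fun n => V n i) x (w i)) =
          ⨆ b, φ.val N (Function.update (fun n => V n i) x b) := fun i =>
        Classical.choose_spec (MTL.exists_eq_iSup (fun b => φ.val N
          (Function.update (fun n => V n i) x b)))
      refine le_trans ?_ (le_iSup (fun d : Quotient (ultraSetoid U N) => φ.val (ultraPower U N) (Function.update (fun n => ⟦V n⟧) x d)) ⟦w⟧)
      rw [key ⟦w⟧]
      refine le_of_eq ?_
      refine ((limU_congr U (Filter.mem_of_superset (ultra_out_ae U N w) fun i hi => ?_)).trans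
        (limU_congr U (Filter.univ_mem' fun i => hws i))).symm
      simp only [Set.mem_setOf_eq] at hi ⊢
      rw [hi]

/-- Ultrapowers are elementarily equivalent to the base structure. -/
lemma ultraPower_elemEquiv : ElemEquiv (ultraPower U N) N := by
  intro σ hσ
  have v₀ : ℕ → N.Dom := fun _ => Classical.ofNonempty
  rw [Formula.valid_iff_val_one (M := ultraPower U N) hσ (fun n => ⟦fun _ => v₀ n⟧),
    Formula.valid_iff_val_one (M := N) hσ v₀, Formula.val_ultra U N σ (fun n _ => v₀ n)]
  have : (fun i => σ.val N fun n => v₀ n) = fun _ : J => σ.val N v₀ := rfl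
  rw [this, limU_const]

end Ultra


/-! ### Local realization of finite pieces of the positive diagram -/

/-- The type of positive atomic facts of a structure. -/
def Facts (M : Structure L A) : Type u :=
  {q : Formula L × (ℕ → M.Dom) // IsAtomicFormula q.1 ∧ q.1.val M q.2 = 1}

lemma exists_local_real (Mstar N : Structure L A) (hone : (1 : A) ≠ ⊥)
    (hppNT : ∀ σ : Formula L, IsPP σ → σ.IsSentence → Valid Mstar σ → Valid N σ)
    (F : Finset (Facts Mstar)) :
    ∃ g : Mstar.Dom → N.Dom, ∀ q ∈ F, q.1.1.val N (g ∘ q.1.2) = 1 := by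
  classical
  set E : Set Mstar.Dom := ⋃ q ∈ (↑F : Set (Facts Mstar)), (q.1.2 '' q.1.1.fvars) with hE
  have hEfin : E.Finite :=
    Set.Finite.biUnion F.finite_toSet fun q _ => (q.2.1.fvars_finite).image q.1.2
  haveI : Fintype E := hEfin.fintype
  set n := Fintype.card E with hn
  set eqv : E ≃ Fin n := Fintype.equivFin E with heqv
  have hmemE : ∀ q ∈ F, ∀ m ∈ q.1.1.fvars, q.1.2 m ∈ E := by
    intro q hq m hm
    exact Set.mem_biUnion (Finset.mem_coe.2 hq) (Set.mem_image_of_mem _ hm)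
  -- the renaming of each fact
  set ρ : Facts Mstar → ℕ → ℕ := fun q m =>
    if h : q.1.2 m ∈ E then (eqv ⟨q.1.2 m, h⟩ : ℕ) + 1 else 0 with hρ
  have hρle : ∀ q m, ρ q m < n + 1 := by
    intro q m
    by_cases h : q.1.2 m ∈ E
    · simp only [hρ, dif_pos h]
      exact Nat.succ_lt_succ (eqv ⟨q.1.2 m, h⟩).isLt
    · simp only [hρ, dif_neg h]
      exact Nat.succ_pos n
  set lfor : List (Formula L) := F.toList.map (fun q => q.1.1.rename (ρ q)) with hlfor
  set σF : Formula L := exClose (List.range (n + 1)) (conjList lfor) with hσF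
  have hmemlfor : ∀ φ ∈ lfor, ∃ q ∈ F, φ = q.1.1.rename (ρ q) := by
    intro φ hφ
    obtain ⟨q, hq, rfl⟩ := List.mem_map.1 hφ
    exact ⟨q, Finset.mem_toList.1 hq, rfl⟩
  have hatom : ∀ φ ∈ lfor, IsAtomicFormula φ := by
    intro φ hφ
    obtain ⟨q, _, rfl⟩ := hmemlfor φ hφ
    exact q.2.1.rename
  have hpp : IsPP σF := exClose_isPP (conjList_qfconj hatom)
  have hsen : σF.IsSentence := by
    rw [Formula.IsSentence, hσF, exClose_fvars, Set.diff_eq_empty]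
    intro m hm
    rcases conjList_fvars hm with h | h
    · simp only [Set.mem_singleton_iff] at h
      subst h
      simp [List.mem_range]
    · simp only [Set.mem_iUnion] at h
      obtain ⟨φ, hφ, hmφ⟩ := h
      obtain ⟨q, hq, rfl⟩ := hmemlfor φ hφ
      rw [q.2.1.fvars_rename] at hmφ
      obtain ⟨m', _, rfl⟩ := hmφ
      simp only [Set.mem_setOf_eq, List.mem_range]
      exact hρle q m'
  -- σF is valid in Mstar
  have hvalM : Valid Mstar σF := by
    refine (Formula.valid_iff_val_one hsen (fun _ => Classical.ofNonempty)).2 ?_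
    rw [hσF]
    refine (exClose_val_eq_one _).2 ?_
    set dec : ℕ → Mstar.Dom := fun k =>
      if h : k - 1 < n ∧ k ≠ 0 then (eqv.symm ⟨k - 1, h.1⟩ : Mstar.Dom)
      else Classical.ofNonempty with hdec
    refine ⟨fun k => if k < n + 1 then dec k else Classical.ofNonempty, fun m hm => ?_, ?_⟩
    · have hm' : ¬ m < n + 1 := fun h => hm (List.mem_range.2 h)
      simp only [hm', if_false]
    · refine (conjList_val_eq_one _).2 fun φ hφ => ?_
      obtain ⟨q, hq, rfl⟩ := hmemlfor φ hφ
      rw [q.2.1.val_rename]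
      have : q.1.1.val Mstar
          ((fun k => if k < n + 1 then dec k else Classical.ofNonempty) ∘ ρ q) =
          q.1.1.val Mstar q.1.2 := by
        refine Formula.val_congr fun m hm => ?_
        have hmE : q.1.2 m ∈ E := hmemE q hq m hm
        have : ρ q m = (eqv ⟨q.1.2 m, hmE⟩ : ℕ) + 1 := by
          simp only [hρ]; rw [dif_pos hmE]
        simp only [Function.comp_apply, this, if_pos (Nat.succ_lt_succ (eqv _).isLt)]
        simp only [hdec]
        have hlt : (eqv ⟨q.1.2 m, hmE⟩ : ℕ) + 1 - 1 < n ∧ (eqv ⟨q.1.2 m, hmE⟩ : ℕ) + 1 ≠ 0 :=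
          ⟨by simpa using (eqv ⟨q.1.2 m, hmE⟩).isLt, Nat.succ_ne_zero _⟩
        rw [dif_pos hlt]
        have : (⟨(eqv ⟨q.1.2 m, hmE⟩ : ℕ) + 1 - 1, hlt.1⟩ : Fin n) = eqv ⟨q.1.2 m, hmE⟩ := by
          ext; simp
        rw [this, Equiv.symm_apply_apply]
      rw [this]
      exact q.2.2
  -- hence valid in N; extract the witnesses
  have hvalN : Valid N σF := hppNT σF hpp hsen hvalM
  have := (Formula.valid_iff_val_one hsen (fun _ => Classical.ofNonempty)).1 hvalN
  rw [hσF] at this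
  obtain ⟨β, -, hβ⟩ := (exClose_val_eq_one _).1 this
  rw [conjList_val_eq_one] at hβ
  refine ⟨fun a => if h : a ∈ E then β ((eqv ⟨a, h⟩ : ℕ) + 1) else Classical.ofNonempty,
    fun q hq => ?_⟩
  have hφ : (q.1.1.rename (ρ q)).val N β = 1 :=
    hβ _ (List.mem_map.2 ⟨q, Finset.mem_toList.2 hq, rfl⟩)
  rw [q.2.1.val_rename] at hφ
  have : q.1.1.val N (β ∘ ρ q) = q.1.1.val N
      ((fun a => if h : a ∈ E then β ((eqv ⟨a, h⟩ : ℕ) + 1) else Classical.ofNonempty)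
        ∘ q.1.2) := by
    refine Formula.val_congr fun m hm => ?_
    have hmE : q.1.2 m ∈ E := hmemE q hq m hm
    simp only [Function.comp_apply, hρ, dif_pos hmE]
  rw [← this]
  exact hφ


/-! ### The hard direction -/

lemma ite_one_bot_iff {c : Prop} [Decidable c] (hone : (1 : A) ≠ ⊥)
    (h : (if c then (1 : A) else ⊥) = 1) : c := by
  by_contra hc
  rw [if_neg hc] at h
  exact hone h.symm

lemma models_of_pp_consequences (T : Set (Formula L)) (hsent : ∀ σ ∈ T, σ.IsSentence)
    (hhom : ∀ (M N : Structure L A) (g : M.Dom → N.Dom),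
      IsHom M N g → Models M T → Models N T)
    (hprod : ∀ (I : Type u) [Nonempty I] (Ms : I → Structure L A),
      (∀ i, Models (Ms i) T) → Models (dirProd Ms) T)
    (hcons : ∃ M : Structure L A, Models M T) (N : Structure L A)
    (hN : ∀ σ : Formula L, IsPP σ → σ.IsSentence →
      (∀ M : Structure L A, Models M T → Valid M σ) → Valid N σ) :
    Models N T := by
  classical
  by_cases hone : (1 : A) = ⊥
  · intro σ _ v
    exact (MTL.trivial_of_one_eq_bot hone _)
  obtain ⟨M₀, hM₀⟩ := hcons
  -- Step 1: the product of counterexample models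
  set S : Set (Formula L) := {σ | IsPP σ ∧ σ.IsSentence ∧ ¬ Valid N σ} with hS
  have hMσ : ∀ σ : S, ∃ M : Structure L A, Models M T ∧ ¬ Valid M (σ : Formula L) := by
    rintro ⟨σ, hpp, hsen, hnv⟩
    by_contra h
    push_neg at h
    exact hnv (hN σ hpp hsen h)
  choose Mof hMof1 hMof2 using hMσ
  set Ms : (↥S ⊕ PUnit.{u+1}) → Structure L A := Sum.elim Mof (fun _ => M₀) with hMs
  have hMsT : ∀ i, Models (Ms i) T := by
    rintro (σ | _)
    · exact hMof1 σ
    · exact hM₀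
  set Mstar := dirProd Ms with hMstar
  have hMstarT : Models Mstar T := hprod _ Ms hMsT
  have hppNT : ∀ σ : Formula L, IsPP σ → σ.IsSentence → Valid Mstar σ → Valid N σ := by
    intro σ hpp hsen hval
    by_contra hnv
    have hσS : σ ∈ S := ⟨hpp, hsen, hnv⟩
    have hproj := dirProd_proj_isHom Ms (Sum.inl ⟨σ, hσS⟩)
    exact hMof2 ⟨σ, hσS⟩ ((Formula.valid_iff_val_one hsen _).2
      (hpp.val_hom hproj (fun _ => Classical.ofNonempty) (hval _)))
  -- Step 2: local realizations
  choose gF hgF using fun F : Finset (Facts Mstar) =>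
    exists_local_real Mstar N hone hppNT F
  -- Step 3: an ultrafilter refining the filter of upward-closed families
  haveI : DecidableEq (Facts Mstar) := Classical.decEq _
  haveI : Nonempty (Finset (Facts Mstar)) := ⟨∅⟩
  set U : Ultrafilter (Finset (Facts Mstar)) :=
    Ultrafilter.of (Filter.atTop : Filter (Finset (Facts Mstar))) with hU
  have hUone : ∀ q : Facts Mstar, {F : Finset (Facts Mstar) | q ∈ F} ∈ U := by
    intro q
    refine Filter.mem_of_superset (Ultrafilter.of_le _ (Filter.mem_atTop ({q} : Finset (Facts Mstar)))) fun F hF => ?_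
    exact Finset.singleton_subset_iff.1 hF
  -- Step 4: the homomorphism into the ultrapower of N
  set NU := ultraPower U N with hNU
  set h : Mstar.Dom → NU.Dom :=
    fun a => (⟦fun F => gF F a⟧ : Quotient (ultraSetoid U N)) with hh
  have hout : ∀ a : Mstar.Dom, {F | (⟦fun F => gF F a⟧ :
      Quotient (ultraSetoid U N)).out F = gF F a} ∈ U :=
    fun a => ultra_out_ae U N _
  have hhomh : IsHom Mstar NU h := by
    constructor
    · intro f d
      set α : ℕ → Mstar.Dom :=
        fun m => if hm : m < L.funcAr f then d ⟨m, hm⟩ else Mstar.funMap f d with hα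
      have hαk : ∀ k : Fin (L.funcAr f), α (k : ℕ) = d k := by
        intro k
        simp only [hα]
        rw [dif_pos k.isLt]
      have hαn : α (L.funcAr f) = Mstar.funMap f d := by
        simp only [hα]
        rw [dif_neg (lt_irrefl _)]
      have hqval : (Formula.eq (.func f (fun k => .var (k : ℕ)))
          (.var (L.funcAr f))).val Mstar α = 1 := by
        show (if (Term.func f fun k => Term.var (k : ℕ)).val Mstar α =
          (Term.var (L.funcAr f)).val Mstar α then (1 : A) else ⊥) = 1
        rw [if_pos]
        show Mstar.funMap f (fun k => (Term.var (k : ℕ)).val Mstar α) = α (L.funcAr f)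
        rw [hαn]
        congr 1
        funext k
        exact hαk k
      set q : Facts Mstar := ⟨(.eq (.func f (fun k => .var (k : ℕ))) (.var (L.funcAr f)), α),
        ⟨.eq _ _, hqval⟩⟩ with hq
      show (⟦fun F => gF F (Mstar.funMap f d)⟧ : Quotient (ultraSetoid U N)) =
        ⟦fun F => N.funMap f (fun k => ((h ∘ d) k).out F)⟧
      refine Quotient.sound ?_
      show {F | gF F (Mstar.funMap f d) = N.funMap f (fun k => ((h ∘ d) k).out F)} ∈ U
      have hinter : (⋂ k : Fin (L.funcAr f),
          {F | (⟦fun F => gF F (d k)⟧ : Quotient (ultraSetoid U N)).out F = gF F (d k)}) ∈ U :=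
        Filter.iInter_mem.2 fun k => hout (d k)
      refine Filter.mem_of_superset (Filter.inter_mem hinter (hUone q)) ?_
      rintro F ⟨hF1, hF2⟩
      simp only [Set.mem_iInter, Set.mem_setOf_eq] at hF1 ⊢
      have hc : (if N.funMap f (fun k => gF F (α (k : ℕ))) = gF F (α (L.funcAr f))
          then (1 : A) else ⊥) = 1 := hgF F q hF2
      have hc' := ite_one_bot_iff hone hc
      rw [hαn] at hc'
      calc gF F (Mstar.funMap f d) = N.funMap f (fun k => gF F (α (k : ℕ))) := hc'.symm
        _ = N.funMap f (fun k => ((h ∘ d) k).out F) := by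
            congr 1
            funext k
            rw [hαk k]
            exact (hF1 k).symm
    · intro P d hd
      set α : ℕ → Mstar.Dom :=
        fun m => if hm : m < L.predAr P then d ⟨m, hm⟩ else Classical.ofNonempty with hα
      have hαk : ∀ k : Fin (L.predAr P), α (k : ℕ) = d k := by
        intro k
        simp only [hα]
        rw [dif_pos k.isLt]
      have hqval : (Formula.rel P (fun k => .var (k : ℕ))).val Mstar α = 1 := by
        show Mstar.relMap P (fun k => (Term.var (k : ℕ)).val Mstar α) = 1
        have he : (fun k : Fin (L.predAr P) => (Term.var (k : ℕ)).val Mstar α) = d := by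
          funext k
          exact hαk k
        rw [he]
        exact hd
      set q : Facts Mstar := ⟨(.rel P (fun k => .var (k : ℕ)), α), ⟨.rel _ _, hqval⟩⟩ with hq
      show limU U (fun F => N.relMap P (fun k => ((h ∘ d) k).out F)) = 1
      rw [limU_eq_one_iff]
      have hinter : (⋂ k : Fin (L.predAr P),
          {F | (⟦fun F => gF F (d k)⟧ : Quotient (ultraSetoid U N)).out F = gF F (d k)}) ∈ U :=
        Filter.iInter_mem.2 fun k => hout (d k)
      refine Filter.mem_of_superset (Filter.inter_mem hinter (hUone q)) ?_
      rintro F ⟨hF1, hF2⟩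
      simp only [Set.mem_iInter, Set.mem_setOf_eq] at hF1 ⊢
      have hc : N.relMap P (fun k : Fin (L.predAr P) => gF F (α (k : ℕ))) = 1 := hgF F q hF2
      have he : (fun k => ((h ∘ d) k).out F) =
          fun k : Fin (L.predAr P) => gF F (α (k : ℕ)) := by
        funext k
        rw [hαk k]
        exact hF1 k
      rw [he]
      exact hc
  -- Step 5: conclude by elementary equivalence with the ultrapower
  have hNUT : Models NU T := hhom Mstar NU h hhomh hMstarT
  intro σ hσ
  exact (ultraPower_elemEquiv U N σ (hsent σ hσ)).1 (hNUT σ hσ)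

end Aux

/-- **Theorem 4.1: axiomatization by pp-sentences.**  A consistent theory `T`
(a set of sentences with an `A`-model) is closed under homomorphisms and under
`A`-direct products iff it is axiomatized by a set of positive-primitive
sentences. -/
theorem pp_axiomatization {A : Type u} [MTLChain A] {L : Lang.{u}}
    (T : Set (Formula L)) (hsent : ∀ σ ∈ T, σ.IsSentence)
    (hcons : ∃ M : Structure L A, Models M T) :
    ((∀ (M N : Structure L A) (g : M.Dom → N.Dom),
        IsHom M N g → Models M T → Models N T) ∧
     (∀ (I : Type u) [Nonempty I] (Ms : I → Structure L A),
        (∀ i, Models (Ms i) T) → Models (dirProd Ms) T)) ↔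
      ∃ Sig : Set (Formula L), (∀ σ ∈ Sig, IsPP σ ∧ σ.IsSentence) ∧
        ∀ M : Structure L A, Models M T ↔ Models M Sig := by
  constructor
  · rintro ⟨hhom, hprod⟩
    refine ⟨{σ | IsPP σ ∧ σ.IsSentence ∧ ∀ M : Structure L A, Models M T → Valid M σ},
      fun σ hσ => ⟨hσ.1, hσ.2.1⟩, fun N => ⟨fun hM σ hσ => hσ.2.2 N hM, fun hSig => ?_⟩⟩
    exact models_of_pp_consequences T hsent hhom hprod hcons N
      (fun σ hpp hsen hall => hSig σ ⟨hpp, hsen, hall⟩)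
  · rintro ⟨Sig, h1, h2⟩
    exact pp_axioms_closed Sig h1 h2
end
end
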